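/- Let U ⊆ ℂ × ℂ be open, let G : U → Matrix (Fin p) (Fin p) ℂ be analytic on U, and let z, w ∈ ℂ be such that (z, conj w) ∈ U. Then there exists M₀ > 0 such that for every real M with 0 < M < M₀ there is C ≥ 0 such that for all u, v ∈ ℓ²(ℕ, ℂᵖ) the family (n,m) ↦ (u_n)^* 𝒦_{n,m}(z,w) M^{n+m} v_m is absolutely summable with |∑_{n,m≥0} (u_n)^* 𝒦_{n,m}(z,w) M^{n+m} v_m| ≤ C·‖u‖_{ℓ²}·‖v‖_{ℓ²}; i.e. the scaled block matrix (𝒦_{n,m}(z,w) M^{n+m}) defines a bounded operator on ℓ²(ℕ, ℂᵖ). -/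

import Mathlib

open scoped ComplexConjugate InnerProductSpace

attribute [local instance] Matrix.normedAddCommGroup Matrix.normedSpace

/-- `𝒦_{n,m}(z,w) := (1/(n!·m!)) ∂₁ⁿ∂₂ᵐ G(z, conj w)`: the normalized iterated partial
derivative of `G`, `m` times in the second variable at `conj w`, then `n` times in the first
variable at `z`.  This encodes the kernel `K(z,w) = G(z, conj w)`, analytic in `z` and `w̄`. -/
noncomputable def kernelCoeff {p : ℕ} (G : ℂ × ℂ → Matrix (Fin p) (Fin p) ℂ)
    (n m : ℕ) (z w : ℂ) : Matrix (Fin p) (Fin p) ℂ :=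
  ((n.factorial * m.factorial : ℂ)⁻¹) •
    iteratedDeriv n (fun z' => iteratedDeriv m (fun ζ => G (z', ζ)) (conj w)) z

section Aux

open Metric Real
open scoped NNReal

/-- Cauchy estimate for iterated derivatives. -/
lemma cauchy_iteratedDeriv_bound {F : Type*} [NormedAddCommGroup F] [NormedSpace ℂ F]
    [CompleteSpace F] {f : ℂ → F} {c : ℂ} {R : ℝ≥0} {B : ℝ} (hR : 0 < R)
    (hf : DifferentiableOn ℂ f (Metric.closedBall c R))
    (hB : ∀ x ∈ Metric.closedBall c (R : ℝ), ‖f x‖ ≤ B) (n : ℕ) :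
    ‖iteratedDeriv n f c‖ ≤ n.factorial * B * ((R : ℝ)⁻¹) ^ n := by
  have hR0 : (0:ℝ) < R := hR
  have h := hf.hasFPowerSeriesOnBall hR
  have hcoef : ‖cauchyPowerSeries f c R n‖ ≤ B * ((R : ℝ)⁻¹) ^ n := by
    refine (norm_cauchyPowerSeries_le f c R n).trans ?_
    have hint : IntervalIntegrable (fun θ : ℝ => ‖f (circleMap c R θ)‖)
        MeasureTheory.volume 0 (2 * π) := by
      apply ContinuousOn.intervalIntegrable
      apply ((hf.continuousOn.comp (continuous_circleMap c R).continuousOn ?_).norm)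
      intro θ _
      exact sphere_subset_closedBall (circleMap_mem_sphere c hR0.le θ)
    have hmono : (∫ θ : ℝ in (0:ℝ)..2 * π, ‖f (circleMap c R θ)‖) ≤ 2 * π * B := by
      have := intervalIntegral.integral_mono_on (by positivity : (0:ℝ) ≤ 2 * π) hint
        (intervalIntegrable_const (c := B))
        (fun θ _ => hB _ (sphere_subset_closedBall (circleMap_mem_sphere c hR0.le θ)))
      simpa [intervalIntegral.integral_const, smul_eq_mul] using this
    have habs : |(R:ℝ)|⁻¹ ^ n = ((R:ℝ)⁻¹) ^ n := by rw [abs_of_nonneg hR0.le]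
    rw [habs]
    have h2pi : (0:ℝ) < 2 * π := by positivity
    calc (2 * π)⁻¹ * (∫ θ : ℝ in (0:ℝ)..2 * π, ‖f (circleMap c R θ)‖) * ((R:ℝ)⁻¹) ^ n
        ≤ (2 * π)⁻¹ * (2 * π * B) * ((R:ℝ)⁻¹) ^ n := by gcongr
      _ = B * ((R:ℝ)⁻¹) ^ n := by field_simp
  rw [iteratedDeriv_eq_iteratedFDeriv, ← h.factorial_smul (1 : ℂ) n]
  rw [← Nat.cast_smul_eq_nsmul ℝ, norm_smul, Real.norm_natCast]
  have hle : ‖(cauchyPowerSeries f c R n) fun _ => (1:ℂ)‖ ≤ ‖cauchyPowerSeries f c R n‖ := by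
    have := (cauchyPowerSeries f c R n).le_opNorm (fun _ => (1:ℂ))
    simpa using this
  calc (n.factorial : ℝ) * ‖(cauchyPowerSeries f c R n) fun _ => (1:ℂ)‖
      ≤ (n.factorial : ℝ) * (B * ((R:ℝ)⁻¹) ^ n) :=
        mul_le_mul_of_nonneg_left (hle.trans hcoef) (by positivity)
    _ = n.factorial * B * ((R : ℝ)⁻¹) ^ n := by ring

lemma euclid_coord_le {p : ℕ} (x : EuclideanSpace ℂ (Fin p)) (i : Fin p) : ‖x i‖ ≤ ‖x‖ := by
  rw [EuclideanSpace.norm_eq, ← Real.sqrt_sq (norm_nonneg (x i))]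
  apply Real.sqrt_le_sqrt
  exact Finset.single_le_sum (fun j _ => sq_nonneg ‖x j‖) (Finset.mem_univ i)

lemma inner_toEuclideanLin_bound {p : ℕ} (K : Matrix (Fin p) (Fin p) ℂ)
    (x y : EuclideanSpace ℂ (Fin p)) :
    ‖⟪x, Matrix.toEuclideanLin K y⟫_ℂ‖ ≤ (p:ℝ)^2 * ‖K‖ * ‖x‖ * ‖y‖ := by
  have key : ⟪x, Matrix.toEuclideanLin K y⟫_ℂ = ∑ i, ∑ j, conj (x i) * (K i j * y j) := by
    simp [PiLp.inner_apply, Matrix.toEuclideanLin_apply, Matrix.mulVec, dotProduct,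
      RCLike.inner_apply, Finset.mul_sum, Finset.sum_mul]
    refine Finset.sum_congr rfl fun i _ => Finset.sum_congr rfl fun j _ => ?_
    ring
  rw [key]
  have h1 : ‖∑ i, ∑ j, conj (x i) * (K i j * y j)‖
      ≤ ∑ _i : Fin p, ∑ _j : Fin p, ‖x‖ * (‖K‖ * ‖y‖) := by
    refine (norm_sum_le _ _).trans (Finset.sum_le_sum fun i _ =>
      (norm_sum_le _ _).trans (Finset.sum_le_sum fun j _ => ?_))
    rw [norm_mul, norm_mul, RCLike.norm_conj]
    gcongr
    · exact euclid_coord_le x i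
    · exact Matrix.norm_entry_le_entrywise_sup_norm K
    · exact euclid_coord_le y j
  refine h1.trans (le_of_eq ?_)
  simp [Finset.sum_const]
  ring

noncomputable instance matrixCompleteAux {p : ℕ} : CompleteSpace (Matrix (Fin p) (Fin p) ℂ) :=
  FiniteDimensional.complete ℂ _

/-- Iterated partial derivative of `G` in the second variable, as a jointly defined function. -/
noncomputable def partialDeriv2 {p : ℕ} (G : ℂ × ℂ → Matrix (Fin p) (Fin p) ℂ) :
    ℕ → ℂ × ℂ → Matrix (Fin p) (Fin p) ℂ
  | 0 => G
  | (m + 1) => fun x => fderiv ℂ (partialDeriv2 G m) x (0, 1)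

lemma partialDeriv2_analytic {p : ℕ} {U : Set (ℂ × ℂ)}
    {G : ℂ × ℂ → Matrix (Fin p) (Fin p) ℂ} (hG : AnalyticOnNhd ℂ G U) (m : ℕ) :
    AnalyticOnNhd ℂ (partialDeriv2 G m) U := by
  induction m with
  | zero => exact hG
  | succ m ih =>
      exact (ContinuousLinearMap.apply ℂ (Matrix (Fin p) (Fin p) ℂ)
        ((0 : ℂ), (1 : ℂ))).comp_analyticOnNhd ih.fderiv

lemma partialDeriv2_eq {p : ℕ} {U : Set (ℂ × ℂ)} (hU : IsOpen U)
    {G : ℂ × ℂ → Matrix (Fin p) (Fin p) ℂ} (hG : AnalyticOnNhd ℂ G U) (m : ℕ) :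
    ∀ x ∈ U, iteratedDeriv m (fun ζ => G (x.1, ζ)) x.2 = partialDeriv2 G m x := by
  induction m with
  | zero => intro x _; simp [partialDeriv2]
  | succ m ih =>
      rintro ⟨x1, x2⟩ hx
      rw [iteratedDeriv_succ]
      have hopen : IsOpen {ζ : ℂ | (x1, ζ) ∈ U} := hU.preimage (by fun_prop)
      have hev : (fun ζ => iteratedDeriv m (fun t => G (x1, t)) ζ)
          =ᶠ[nhds x2] fun ζ => partialDeriv2 G m (x1, ζ) := by
        filter_upwards [hopen.mem_nhds hx] with ζ hζ
        exact ih (x1, ζ) hζ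
      rw [hev.deriv_eq]
      have hd : HasFDerivAt (partialDeriv2 G m)
          (fderiv ℂ (partialDeriv2 G m) (x1, x2)) (x1, x2) :=
        ((partialDeriv2_analytic hG m) (x1, x2) hx).differentiableAt.hasFDerivAt
      have hg : HasDerivAt (fun ζ : ℂ => ((x1 : ℂ), ζ)) ((0 : ℂ), (1 : ℂ)) x2 :=
        HasDerivAt.prodMk (hasDerivAt_const x2 x1) (hasDerivAt_id x2)
      have hcomp := hd.comp_hasDerivAt x2 hg
      have hcomp' : HasDerivAt (fun ζ => partialDeriv2 G m (x1, ζ))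
          ((fderiv ℂ (partialDeriv2 G m) (x1, x2)) (0, 1)) x2 := hcomp
      rw [hcomp'.deriv]
      rfl

end Aux

open Metric Real
open scoped NNReal

/-- For a kernel analytic on an open set `U ⊆ ℂ × ℂ` with `(z, conj w) ∈ U`,
there is `M₀ > 0` such that for every `0 < M < M₀` the scaled semi-infinite block matrix
`(𝒦_{n,m}(z,w) M^{n+m})` defines a bounded operator on `ℓ²(ℕ, ℂᵖ)`. -/
theorem kernelCoeff_scaled_block_bounded
    {p : ℕ} (hp : 1 ≤ p) (U : Set (ℂ × ℂ)) (hU : IsOpen U)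
    (G : ℂ × ℂ → Matrix (Fin p) (Fin p) ℂ) (hG : AnalyticOnNhd ℂ G U)
    (z w : ℂ) (hzw : (z, conj w) ∈ U) :
    ∃ M₀ : ℝ, 0 < M₀ ∧ ∀ M : ℝ, 0 < M → M < M₀ →
      ∃ C : ℝ, 0 ≤ C ∧
        ∀ u v : lp (fun _ : ℕ => EuclideanSpace ℂ (Fin p)) 2,
          Summable (fun nm : ℕ × ℕ =>
            ‖⟪(u nm.1 : EuclideanSpace ℂ (Fin p)),
                (M : ℂ) ^ (nm.1 + nm.2) •
                  Matrix.toEuclideanLin (kernelCoeff G nm.1 nm.2 z w) (v nm.2)⟫_ℂ‖) ∧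
          ‖∑' nm : ℕ × ℕ,
              ⟪(u nm.1 : EuclideanSpace ℂ (Fin p)),
                (M : ℂ) ^ (nm.1 + nm.2) •
                  Matrix.toEuclideanLin (kernelCoeff G nm.1 nm.2 z w) (v nm.2)⟫_ℂ‖
            ≤ C * ‖u‖ * ‖v‖ := by
  obtain ⟨ε, hε, hball⟩ := Metric.isOpen_iff.1 hU _ hzw
  set r : ℝ≥0 := ⟨ε / 2, by positivity⟩ with hrdef
  have hr0 : (0:ℝ) < r := half_pos hε
  have hrε : (r:ℝ) < ε := half_lt_self hε
  have hV : Metric.closedBall z (r:ℝ) ×ˢ Metric.closedBall (conj w) (r:ℝ) ⊆ U := by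
    rintro ⟨x1, x2⟩ ⟨h1, h2⟩
    apply hball
    rw [Metric.mem_ball, Prod.dist_eq]
    exact max_lt (lt_of_le_of_lt h1 hrε) (lt_of_le_of_lt h2 hrε)
  obtain ⟨B, hBbd⟩ := ((isCompact_closedBall z (r:ℝ)).prod
    (isCompact_closedBall (conj w) (r:ℝ))).exists_bound_of_continuousOn
    (hG.continuousOn.mono hV)
  have hB0 : 0 ≤ B := le_trans (norm_nonneg _)
    (hBbd (z, conj w) ⟨mem_closedBall_self hr0.le, mem_closedBall_self hr0.le⟩)
  -- pointwise equality of iterated partials with the joint function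
  have heq : ∀ z' : ℂ, (z', conj w) ∈ U → ∀ m : ℕ,
      iteratedDeriv m (fun ζ => G (z', ζ)) (conj w) = partialDeriv2 G m (z', conj w) :=
    fun z' hz' m => partialDeriv2_eq hU hG m (z', conj w) hz'
  -- inner Cauchy estimate
  have hHbound : ∀ m : ℕ, ∀ z' ∈ Metric.closedBall z (r:ℝ),
      ‖partialDeriv2 G m (z', conj w)‖ ≤ m.factorial * B * ((r:ℝ)⁻¹) ^ m := by
    intro m z' hz'
    have hmem : (z', conj w) ∈ U := hV ⟨hz', mem_closedBall_self hr0.le⟩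
    rw [← heq z' hmem m]
    refine cauchy_iteratedDeriv_bound hr0 ?_ ?_ m
    · intro ζ hζ
      have hmem' : (z', ζ) ∈ U := hV ⟨hz', hζ⟩
      exact ((hG _ hmem').comp
        (analyticAt_const.prod analyticAt_id)).differentiableAt.differentiableWithinAt
    · intro ζ hζ
      exact hBbd (z', ζ) ⟨hz', hζ⟩
  -- outer Cauchy estimate, giving the coefficient bound
  have hK : ∀ n m : ℕ, ‖kernelCoeff G n m z w‖ ≤ B * ((r:ℝ)⁻¹) ^ (n + m) := by
    intro n m
    have hsub : ∀ z' ∈ Metric.closedBall z (r:ℝ), (z', conj w) ∈ U :=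
      fun z' hz' => hV ⟨hz', mem_closedBall_self hr0.le⟩
    have houter : ‖iteratedDeriv n
        (fun z' => iteratedDeriv m (fun ζ => G (z', ζ)) (conj w)) z‖
        ≤ n.factorial * (m.factorial * B * ((r:ℝ)⁻¹) ^ m) * ((r:ℝ)⁻¹) ^ n := by
      refine cauchy_iteratedDeriv_bound hr0 ?_ ?_ n
      · have hdg : DifferentiableOn ℂ (fun z' => partialDeriv2 G m (z', conj w))
            (Metric.closedBall z (r:ℝ)) := by
          intro z' hz'
          have h1 : AnalyticAt ℂ (fun z'' : ℂ => (z'', conj w)) z' :=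
            analyticAt_id.prod analyticAt_const
          have h2 : AnalyticAt ℂ ((partialDeriv2 G m) ∘ (fun z'' : ℂ => (z'', conj w))) z' :=
            AnalyticAt.comp ((partialDeriv2_analytic hG m) _ (hsub z' hz')) h1
          exact h2.differentiableAt.differentiableWithinAt
        exact hdg.congr (fun z' hz' => heq z' (hsub z' hz') m)
      · intro z' hz'
        rw [heq z' (hsub z' hz') m]
        exact hHbound m z' hz'
    have hfac1 : ((n.factorial : ℝ)) ≠ 0 := Nat.cast_ne_zero.2 n.factorial_ne_zero
    have hfac2 : ((m.factorial : ℝ)) ≠ 0 := Nat.cast_ne_zero.2 m.factorial_ne_zero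
    have hnorm : ‖kernelCoeff G n m z w‖
        = ((n.factorial : ℝ) * m.factorial)⁻¹ *
          ‖iteratedDeriv n (fun z' => iteratedDeriv m (fun ζ => G (z', ζ)) (conj w)) z‖ := by
      rw [kernelCoeff, norm_smul, norm_inv]
      norm_num
    rw [hnorm]
    calc ((n.factorial : ℝ) * m.factorial)⁻¹ *
          ‖iteratedDeriv n (fun z' => iteratedDeriv m (fun ζ => G (z', ζ)) (conj w)) z‖
        ≤ ((n.factorial : ℝ) * m.factorial)⁻¹ *
          (n.factorial * (m.factorial * B * ((r:ℝ)⁻¹) ^ m) * ((r:ℝ)⁻¹) ^ n) := by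
          exact mul_le_mul_of_nonneg_left houter (by positivity)
      _ = B * ((r:ℝ)⁻¹) ^ (n + m) := by
          rw [pow_add]
          field_simp
  refine ⟨(r:ℝ), hr0, ?_⟩
  intro M hM hMr
  set a : ℝ := M / (r:ℝ) with hadef
  have ha0 : 0 ≤ a := le_of_lt (div_pos hM hr0)
  have ha1 : a < 1 := (div_lt_one hr0).mpr hMr
  have h1a : (0:ℝ) < 1 - a := sub_pos.2 ha1
  refine ⟨(p:ℝ)^2 * B * ((1 - a)⁻¹ * (1 - a)⁻¹),
    mul_nonneg (mul_nonneg (by positivity) hB0)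
      (mul_nonneg (inv_nonneg.2 h1a.le) (inv_nonneg.2 h1a.le)), ?_⟩
  intro u v
  set c0 : ℝ := (p:ℝ)^2 * B * ‖u‖ * ‖v‖ with hc0def
  have hterm : ∀ nm : ℕ × ℕ,
      ‖⟪(u nm.1 : EuclideanSpace ℂ (Fin p)),
          (M : ℂ) ^ (nm.1 + nm.2) •
            Matrix.toEuclideanLin (kernelCoeff G nm.1 nm.2 z w) (v nm.2)⟫_ℂ‖
        ≤ c0 * (a ^ nm.1 * a ^ nm.2) := by
    rintro ⟨n, m⟩
    rw [inner_smul_right, norm_mul, norm_pow]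
    have hMnorm : ‖((M:ℝ) : ℂ)‖ = M := by
      rw [Complex.norm_real]; exact abs_of_pos hM
    rw [hMnorm]
    calc M ^ (n + m) * ‖⟪(u n : EuclideanSpace ℂ (Fin p)),
            Matrix.toEuclideanLin (kernelCoeff G n m z w) (v m)⟫_ℂ‖
        ≤ M ^ (n + m) * ((p:ℝ)^2 * ‖kernelCoeff G n m z w‖ * ‖(u n : EuclideanSpace ℂ (Fin p))‖
            * ‖(v m : EuclideanSpace ℂ (Fin p))‖) :=
          mul_le_mul_of_nonneg_left (inner_toEuclideanLin_bound _ _ _) (by positivity)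
      _ ≤ M ^ (n + m) * ((p:ℝ)^2 * (B * ((r:ℝ)⁻¹) ^ (n + m)) * ‖u‖ * ‖v‖) := by
          gcongr
          · exact hK n m
          · exact lp.norm_apply_le_norm (by norm_num) u n
          · exact lp.norm_apply_le_norm (by norm_num) v m
      _ = c0 * (a ^ n * a ^ m) := by
          rw [hc0def, hadef, div_eq_mul_inv, ← pow_add, mul_pow]
          ring
  have hgeo : Summable (fun n : ℕ => a ^ n) := summable_geometric_of_lt_one ha0 ha1
  have hprod : Summable (fun nm : ℕ × ℕ => a ^ nm.1 * a ^ nm.2) :=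
    hgeo.mul_of_nonneg hgeo (fun n => pow_nonneg ha0 n) (fun n => pow_nonneg ha0 n)
  have hbb : Summable (fun nm : ℕ × ℕ => c0 * (a ^ nm.1 * a ^ nm.2)) := hprod.mul_left _
  have hsum : Summable (fun nm : ℕ × ℕ =>
      ‖⟪(u nm.1 : EuclideanSpace ℂ (Fin p)),
          (M : ℂ) ^ (nm.1 + nm.2) •
            Matrix.toEuclideanLin (kernelCoeff G nm.1 nm.2 z w) (v nm.2)⟫_ℂ‖) :=
    Summable.of_nonneg_of_le (fun _ => norm_nonneg _) hterm hbb
  refine ⟨hsum, ?_⟩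
  calc ‖∑' nm : ℕ × ℕ,
          ⟪(u nm.1 : EuclideanSpace ℂ (Fin p)),
            (M : ℂ) ^ (nm.1 + nm.2) •
              Matrix.toEuclideanLin (kernelCoeff G nm.1 nm.2 z w) (v nm.2)⟫_ℂ‖
      ≤ ∑' nm : ℕ × ℕ,
          ‖⟪(u nm.1 : EuclideanSpace ℂ (Fin p)),
            (M : ℂ) ^ (nm.1 + nm.2) •
              Matrix.toEuclideanLin (kernelCoeff G nm.1 nm.2 z w) (v nm.2)⟫_ℂ‖ :=
        norm_tsum_le_tsum_norm hsum
    _ ≤ ∑' nm : ℕ × ℕ, c0 * (a ^ nm.1 * a ^ nm.2) := Summable.tsum_le_tsum hterm hsum hbb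
    _ = c0 * ∑' nm : ℕ × ℕ, a ^ nm.1 * a ^ nm.2 := tsum_mul_left
    _ = c0 * ((1 - a)⁻¹ * (1 - a)⁻¹) := by
        rw [← Summable.tsum_mul_tsum hgeo hgeo hprod, tsum_geometric_of_lt_one ha0 ha1]
    _ = ((p:ℝ)^2 * B * ((1 - a)⁻¹ * (1 - a)⁻¹)) * ‖u‖ * ‖v‖ := by
        rw [hc0def]; ring
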